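/- arXiv:1410.6299 — 3 statements merged into one kernel-verified Lean document; each statement's English description precedes it below -/
import Mathlib

section
/- Let (X_n) be a sequence of topological vector spaces each having the Heine-Borel property, and let X = ∏_{n=1}^∞ X_n with the product topology. Then every bb-bounded linear operator on X is b-compact and every nb-bounded linear operator on X is n-compact. -/
open Topology Bornology Pointwise

lemma stmt8_aux_closure {E : Type*} [AddCommGroup E] [Module ℝ E] [TopologicalSpace E]
    [IsTopologicalAddGroup E] [ContinuousSMul ℝ E] {B : Set E}
    (hB : IsVonNBounded ℝ B) : IsVonNBounded ℝ (closure B) := by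
  intro V hV
  obtain ⟨W, hWmem, hWclosed, hWV⟩ := exists_mem_nhds_isClosed_subset hV
  have h1 : ∀ᶠ c : ℝ in cobounded ℝ, B ⊆ c • W := hB hWmem
  have h2 : ∀ᶠ c : ℝ in cobounded ℝ, c ≠ 0 :=
    (Bornology.eventually_ne_cobounded 0)
  filter_upwards [h1, h2] with c hc hc0
  have hcl : IsClosed (c • W) := hWclosed.smul_of_ne_zero hc0
  calc closure B ⊆ c • W := closure_minimal hc hcl
    _ ⊆ c • V := Set.smul_set_mono hWV

theorem stmt8 {X : ℕ → Type*} [∀ n, AddCommGroup (X n)] [∀ n, Module ℝ (X n)]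
    [∀ n, TopologicalSpace (X n)] [∀ n, IsTopologicalAddGroup (X n)]
    [∀ n, ContinuousSMul ℝ (X n)]
    (hHB : ∀ n, ∀ s : Set (X n), IsClosed s → IsVonNBounded ℝ s → IsCompact s) :
    (∀ T : (∀ n, X n) →ₗ[ℝ] (∀ n, X n),
        (∀ B : Set (∀ n, X n), IsVonNBounded ℝ B → IsVonNBounded ℝ (T '' B)) →
        ∀ B : Set (∀ n, X n), IsVonNBounded ℝ B → IsCompact (closure (T '' B))) ∧
    (∀ T : (∀ n, X n) →ₗ[ℝ] (∀ n, X n),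
        (∃ U ∈ 𝓝 (0 : ∀ n, X n), IsVonNBounded ℝ (T '' U)) →
        ∃ U ∈ 𝓝 (0 : ∀ n, X n), IsCompact (closure (T '' U))) := by
  have key : ∀ B : Set (∀ n, X n), IsVonNBounded ℝ B → IsCompact (closure B) := by
    intro B hB
    have hproj : ∀ n, IsCompact (closure ((fun x : ∀ n, X n => x n) '' B)) := by
      intro n
      refine hHB n _ isClosed_closure ?_
      exact stmt8_aux_closure (hB.image (ContinuousLinearMap.proj (R := ℝ) (φ := X) n))
    have hsub : closure B ⊆ Set.pi Set.univ
        (fun n => closure ((fun x : ∀ n, X n => x n) '' B)) := by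
      refine closure_minimal ?_ (isClosed_set_pi fun n _ => isClosed_closure)
      intro x hx n _
      exact subset_closure ⟨x, hx, rfl⟩
    exact (isCompact_univ_pi hproj).of_isClosed_subset isClosed_closure hsub
  constructor
  · intro T hT B hB
    exact key _ (hT B hB)
  · rintro T ⟨U, hU, hbd⟩
    exact ⟨U, hU, key _ hbd⟩
end

section
/- Let X, Y, Z be locally convex spaces, θ : X × Y → X ⊗_π Y the canonical bilinear map, and φ : X × Y → Z an n-bounded bilinear mapping. Then the unique linear map T : X ⊗_π Y → Z with T ∘ θ = φ is nb-bounded. -/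
open Topology Bornology TensorProduct Filter

lemma convexHull_isVonNBounded {Z : Type*}
    [AddCommGroup Z] [Module ℝ Z] [TopologicalSpace Z] [IsTopologicalAddGroup Z]
    [ContinuousSMul ℝ Z] [LocallyConvexSpace ℝ Z] {s : Set Z}
    (hs : IsVonNBounded ℝ s) : IsVonNBounded ℝ (convexHull ℝ s) := by
  rw [(LocallyConvexSpace.convex_basis_zero ℝ Z).isVonNBounded_iff]
  intro W ⟨hW, hWc⟩
  have := (hs hW)
  simp only [id]
  filter_upwards [this] with a ha
  exact convexHull_min ha (hWc.smul a)

theorem stmt13 {X Y Z : Type*}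
    [AddCommGroup X] [Module ℝ X] [TopologicalSpace X] [IsTopologicalAddGroup X]
    [ContinuousSMul ℝ X] [LocallyConvexSpace ℝ X]
    [AddCommGroup Y] [Module ℝ Y] [TopologicalSpace Y] [IsTopologicalAddGroup Y]
    [ContinuousSMul ℝ Y] [LocallyConvexSpace ℝ Y]
    [AddCommGroup Z] [Module ℝ Z] [TopologicalSpace Z] [IsTopologicalAddGroup Z]
    [ContinuousSMul ℝ Z] [LocallyConvexSpace ℝ Z]
    [TopologicalSpace (X ⊗[ℝ] Y)]
    -- the projective tensor topology: basic zero neighborhoods are `co (U ⊗ V)`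
    (hπ : (𝓝 (0 : X ⊗[ℝ] Y)).HasBasis
      (fun UV : Set X × Set Y => UV.1 ∈ 𝓝 (0 : X) ∧ UV.2 ∈ 𝓝 (0 : Y))
      (fun UV => convexHull ℝ (Set.image2 (fun x y => x ⊗ₜ[ℝ] y) UV.1 UV.2)))
    (φ : X →ₗ[ℝ] Y →ₗ[ℝ] Z)
    -- `φ` is `n`-bounded
    (hφ : ∃ U ∈ 𝓝 (0 : X), ∃ V ∈ 𝓝 (0 : Y),
      IsVonNBounded ℝ (Set.image2 (fun x y => φ x y) U V))
    (T : X ⊗[ℝ] Y →ₗ[ℝ] Z) (hT : ∀ x y, T (x ⊗ₜ[ℝ] y) = φ x y) :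
    ∃ W ∈ 𝓝 (0 : X ⊗[ℝ] Y), IsVonNBounded ℝ (T '' W) := by
  obtain ⟨U, hU, V, hV, hb⟩ := hφ
  refine ⟨convexHull ℝ (Set.image2 (fun x y => x ⊗ₜ[ℝ] y) U V),
    hπ.mem_of_mem (i := (U, V)) ⟨hU, hV⟩, ?_⟩
  rw [T.image_convexHull]
  have himg : T '' Set.image2 (fun x y => x ⊗ₜ[ℝ] y) U V
      = Set.image2 (fun x y => φ x y) U V := by
    rw [Set.image_image2]
    exact Set.image2_congr fun x _ y _ => hT x y
  rw [himg]
  exact convexHull_isVonNBounded hb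
end

section
/- Let X, Y, Z, W be locally convex spaces, and T : X → Y, S : Z → W nb-bounded linear operators. Then the tensor product operator T ⊗ S : X ⊗_π Z → Y ⊗_π W is nb-bounded. -/
open Topology Bornology TensorProduct Filter
open scoped Pointwise

theorem stmt15 {X Y Z W : Type*}
    [AddCommGroup X] [Module ℝ X] [TopologicalSpace X] [IsTopologicalAddGroup X]
    [ContinuousSMul ℝ X] [LocallyConvexSpace ℝ X]
    [AddCommGroup Y] [Module ℝ Y] [TopologicalSpace Y] [IsTopologicalAddGroup Y]
    [ContinuousSMul ℝ Y] [LocallyConvexSpace ℝ Y]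
    [AddCommGroup Z] [Module ℝ Z] [TopologicalSpace Z] [IsTopologicalAddGroup Z]
    [ContinuousSMul ℝ Z] [LocallyConvexSpace ℝ Z]
    [AddCommGroup W] [Module ℝ W] [TopologicalSpace W] [IsTopologicalAddGroup W]
    [ContinuousSMul ℝ W] [LocallyConvexSpace ℝ W]
    [TopologicalSpace (X ⊗[ℝ] Z)] [TopologicalSpace (Y ⊗[ℝ] W)]
    -- projective tensor topology on `X ⊗ Z`
    (hπXZ : (𝓝 (0 : X ⊗[ℝ] Z)).HasBasis
      (fun UV : Set X × Set Z => UV.1 ∈ 𝓝 (0 : X) ∧ UV.2 ∈ 𝓝 (0 : Z))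
      (fun UV => convexHull ℝ (Set.image2 (fun x z => x ⊗ₜ[ℝ] z) UV.1 UV.2)))
    -- projective tensor topology on `Y ⊗ W`
    (hπYW : (𝓝 (0 : Y ⊗[ℝ] W)).HasBasis
      (fun UV : Set Y × Set W => UV.1 ∈ 𝓝 (0 : Y) ∧ UV.2 ∈ 𝓝 (0 : W))
      (fun UV => convexHull ℝ (Set.image2 (fun y w => y ⊗ₜ[ℝ] w) UV.1 UV.2)))
    (T : X →ₗ[ℝ] Y) (S : Z →ₗ[ℝ] W)
    (hT : ∃ U ∈ 𝓝 (0 : X), IsVonNBounded ℝ (T '' U))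
    (hS : ∃ V ∈ 𝓝 (0 : Z), IsVonNBounded ℝ (S '' V)) :
    ∃ O ∈ 𝓝 (0 : X ⊗[ℝ] Z),
      IsVonNBounded ℝ (TensorProduct.map T S '' O) := by
  obtain ⟨U, hU, hTU⟩ := hT
  obtain ⟨V, hV, hSV⟩ := hS
  refine ⟨convexHull ℝ (Set.image2 (fun x z => x ⊗ₜ[ℝ] z) U V),
    hπXZ.mem_of_mem (i := (U, V)) ⟨hU, hV⟩, ?_⟩
  -- compute the image
  have himg : TensorProduct.map T S '' convexHull ℝ (Set.image2 (fun x z => x ⊗ₜ[ℝ] z) U V)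
      = convexHull ℝ (Set.image2 (fun y w => y ⊗ₜ[ℝ] w) (T '' U) (S '' V)) := by
    rw [(TensorProduct.map T S).image_convexHull]
    congr 1
    rw [Set.image_image2, Set.image2_image_left, Set.image2_image_right]
    simp [TensorProduct.map_tmul]
  rw [himg]
  rw [hπYW.isVonNBounded_iff]
  rintro ⟨U', V'⟩ ⟨hU', hV'⟩
  have hA : Absorbs ℝ U' (T '' U) := hTU hU'
  have hB : Absorbs ℝ V' (S '' V) := hSV hV'
  rw [Absorbs, (Filter.hasBasis_cobounded_norm (E := ℝ)).eventually_iff] at hA hB ⊢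
  obtain ⟨Ra, -, ha⟩ := hA
  obtain ⟨Rb, -, hb⟩ := hB
  set b : ℝ := max Rb 1 with hbdef
  have hb1 : (1 : ℝ) ≤ b := le_max_right _ _
  have hbpos : (0 : ℝ) < b := lt_of_lt_of_le one_pos hb1
  have hBb : S '' V ⊆ b • V' := hb (show Rb ≤ ‖b‖ by rw [Real.norm_of_nonneg hbpos.le]; exact le_max_left _ _)
  refine ⟨max (Ra * b) 1, trivial, fun c hc => ?_⟩
  have hc' : max (Ra * b) 1 ≤ ‖c‖ := hc
  have hcb : Ra ≤ ‖c / b‖ := by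
    rw [norm_div, le_div_iff₀ (by simpa [abs_of_pos hbpos] using hbpos)]
    calc Ra * ‖b‖ = Ra * b := by rw [Real.norm_of_nonneg hbpos.le]
      _ ≤ max (Ra * b) 1 := le_max_left _ _
      _ ≤ ‖c‖ := hc'
  have hAa : T '' U ⊆ (c / b) • U' := ha hcb
  -- main inclusion
  have key : Set.image2 (fun y w => y ⊗ₜ[ℝ] w) (T '' U) (S '' V)
      ⊆ c • Set.image2 (fun y w => y ⊗ₜ[ℝ] w) U' V' := by
    rintro _ ⟨y, hy, w, hw, rfl⟩
    obtain ⟨y', hy', rfl⟩ := hAa hy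
    obtain ⟨w', hw', rfl⟩ := hBb hw
    refine ⟨y' ⊗ₜ[ℝ] w', Set.mem_image2_of_mem hy' hw', ?_⟩
    show c • (y' ⊗ₜ[ℝ] w') = ((c / b) • y') ⊗ₜ[ℝ] (b • w')
    rw [TensorProduct.smul_tmul', TensorProduct.tmul_smul, TensorProduct.smul_tmul',
      smul_smul]
    congr 2
    field_simp
  calc convexHull ℝ (Set.image2 (fun y w => y ⊗ₜ[ℝ] w) (T '' U) (S '' V))
      ⊆ convexHull ℝ (c • Set.image2 (fun y w => y ⊗ₜ[ℝ] w) U' V') := convexHull_mono key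
    _ = c • convexHull ℝ (Set.image2 (fun y w => y ⊗ₜ[ℝ] w) U' V') := convexHull_smul c _
end
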